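/- Let H be a hypothesis class with Ldim(H) = d < ∞ and let (S, x_{T+1}) be an optimally significant input for H (i.e., all optimal online learners for H agree at (S,x_{T+1})). Then there exists m ∈ ℕ such that every optimal online learner makes exactly m mistakes on S, and Ldim(H_S) = d − m. -/
import Mathlib


open Classical

variable {X : Type*}

/-- A hypothesis `h` is consistent with a sample `S`. -/
def Consistent (h : X → Bool) (S : List (X × Bool)) : Prop :=
  ∀ p ∈ S, h p.1 = p.2

/-- A sample is realizable by the class `H`. -/
def Realizable (H : Set (X → Bool)) (S : List (X × Bool)) : Prop :=
  ∃ h ∈ H, Consistent h S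

/-- The version space `H_S`. -/
def VS (H : Set (X → Bool)) (S : List (X × Bool)) : Set (X → Bool) :=
  {h ∈ H | Consistent h S}

/-- `H^{(x,r)}`. -/
def Restrict (H : Set (X → Bool)) (x : X) (r : Bool) : Set (X → Bool) :=
  {h ∈ H | h x = r}

/-- `Shatters H d` holds iff there is a complete binary tree of depth `d` shattered by `H`,
equivalently stated recursively. -/
def Shatters (H : Set (X → Bool)) : ℕ → Prop
  | 0 => H.Nonempty
  | d + 1 => ∃ x : X, Shatters (Restrict H x false) d ∧ Shatters (Restrict H x true) d

/-- Littlestone dimension, with `Ldim ∅ = ⊥` (playing the role of `-1`). -/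
noncomputable def Ldim (H : Set (X → Bool)) : WithBot ℕ∞ :=
  ⨆ d ∈ {d : ℕ | Shatters H d}, ((d : ℕ∞) : WithBot ℕ∞)

def MistakesFrom (A : List (X × Bool) → X → Bool) :
    List (X × Bool) → List (X × Bool) → ℕ
  | _, [] => 0
  | pre, p :: rest =>
      (if A pre p.1 ≠ p.2 then 1 else 0) + MistakesFrom A (pre ++ [p]) rest

/-- Number of mistakes that the online learner `A` makes on the sample `S`. -/
def Mistakes (A : List (X × Bool) → X → Bool) (S : List (X × Bool)) : ℕ :=
  MistakesFrom A [] S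

/-- Mistake bound of `A` with respect to `H`. -/
noncomputable def MB (A : List (X × Bool) → X → Bool) (H : Set (X → Bool)) : ℕ∞ :=
  ⨆ S ∈ {S | Realizable H S}, (Mistakes A S : ℕ∞)

/-- `A` is an optimal online learner for `H`. -/
def IsOptimal (A : List (X × Bool) → X → Bool) (H : Set (X → Bool)) : Prop :=
  MB A H = ⨅ B : List (X × Bool) → X → Bool, MB B H

/-- Post-`S` mistake bound of `A` w.r.t. `H`. -/
noncomputable def PostMB (A : List (X × Bool) → X → Bool) (H : Set (X → Bool))
    (S : List (X × Bool)) : ℕ∞ :=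
  ⨆ S' ∈ {S' | Realizable H (S ++ S')}, ((Mistakes A (S ++ S') - Mistakes A S : ℕ) : ℕ∞)

/-- Optimal post-`S` mistake bound. -/
noncomputable def OptPostMB (H : Set (X → Bool)) (S : List (X × Bool)) : ℕ∞ :=
  ⨅ A : List (X × Bool) → X → Bool, PostMB A H S

/-- `A` is anytime optimal for `H`. -/
def AnytimeOptimal (A : List (X × Bool) → X → Bool) (H : Set (X → Bool)) : Prop :=
  ∀ S, Realizable H S → PostMB A H S = OptPostMB H S

/-- `(S,x)` is an optimally significant input for `H`. -/
def OptSignificant {X : Type*} (H : Set (X → Bool)) (S : List (X × Bool)) (x : X) : Prop :=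
  Realizable H S ∧
    ∀ A A' : List (X × Bool) → X → Bool,
      IsOptimal A H → IsOptimal A' H → A S x = A' S x

attribute [local instance] Classical.propDecidable

section Aux
variable {X : Type*}

lemma restrict_mono {G G' : Set (X → Bool)} (h : G ⊆ G') (x : X) (r : Bool) :
    Restrict G x r ⊆ Restrict G' x r := fun f hf => ⟨h hf.1, hf.2⟩

lemma restrict_subset (G : Set (X → Bool)) (x : X) (r : Bool) : Restrict G x r ⊆ G :=
  fun _ hf => hf.1

lemma shatters_mono {G G' : Set (X → Bool)} (h : G ⊆ G') :
    ∀ {n}, Shatters G n → Shatters G' n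
  | 0, hn => hn.mono h
  | _+1, ⟨x, h0, h1⟩ => ⟨x, shatters_mono (restrict_mono h x false) h0,
      shatters_mono (restrict_mono h x true) h1⟩

lemma shatters_of_succ {G : Set (X → Bool)} {n : ℕ} (h : Shatters G (n+1)) : Shatters G n := by
  obtain ⟨x, h0, _⟩ := h
  exact shatters_mono (restrict_subset G x false) h0

lemma shatters_anti {G : Set (X → Bool)} {m n : ℕ} (hmn : m ≤ n) (h : Shatters G n) :
    Shatters G m := by
  induction n with
  | zero => exact (Nat.le_zero.mp hmn) ▸ h
  | succ n ih =>
    rcases Nat.eq_or_lt_of_le hmn with rfl | hlt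
    · exact h
    · exact ih (Nat.lt_succ_iff.mp hlt) (shatters_of_succ h)

lemma shatters_nonempty {G : Set (X → Bool)} {n : ℕ} (h : Shatters G n) : G.Nonempty :=
  shatters_anti (Nat.zero_le n) h

noncomputable def LdN (G : Set (X → Bool)) : ℕ := sSup {n | Shatters G n}

lemma shatters_le {G : Set (X → Bool)} {d : ℕ} (hb : ¬ Shatters G (d+1)) {n : ℕ}
    (h : Shatters G n) : n ≤ d := by
  by_contra hn
  exact hb (shatters_anti (Nat.succ_le_of_lt (Nat.lt_of_not_le hn)) h)

lemma bddAbove_shatters {G : Set (X → Bool)} {d : ℕ} (hb : ¬ Shatters G (d+1)) :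
    BddAbove {n | Shatters G n} := ⟨d, fun _ hn => shatters_le hb hn⟩

lemma shatters_ldn {G : Set (X → Bool)} {d : ℕ} (hne : G.Nonempty) (hb : ¬ Shatters G (d+1)) :
    Shatters G (LdN G) :=
  Nat.sSup_mem ⟨0, hne⟩ (bddAbove_shatters hb)

lemma le_ldn {G : Set (X → Bool)} {d n : ℕ} (hb : ¬ Shatters G (d+1)) (h : Shatters G n) :
    n ≤ LdN G := le_csSup (bddAbove_shatters hb) h

lemma ldn_le {G : Set (X → Bool)} {d : ℕ} (hb : ¬ Shatters G (d+1)) : LdN G ≤ d :=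
  csSup_le' (fun _ hn => shatters_le hb hn)

lemma ldn_mono {G G' : Set (X → Bool)} {d : ℕ} (hb : ¬ Shatters G' (d+1)) (hsub : G ⊆ G') :
    LdN G ≤ LdN G' :=
  csSup_le' fun _ hn => le_ldn hb (shatters_mono hsub hn)

lemma ldim_eq_coe {G : Set (X → Bool)} {k : ℕ} (h0 : Shatters G k) (h1 : ¬ Shatters G (k+1)) :
    Ldim G = ((k : ℕ∞) : WithBot ℕ∞) := by
  apply le_antisymm
  · apply iSup₂_le
    intro n hn
    have hnk : n ≤ k := shatters_le h1 hn
    exact_mod_cast hnk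
  · exact le_iSup₂ (f := fun (n : ℕ) (_ : n ∈ {n : ℕ | Shatters G n}) => ((n : ℕ∞) : WithBot ℕ∞)) k h0

lemma ldim_eq_bot {G : Set (X → Bool)} (hne : ¬ G.Nonempty) : Ldim G = ⊥ :=
  le_bot_iff.mp (iSup₂_le fun _ hn => (hne (shatters_nonempty hn)).elim)

lemma shatters_of_coe_le_ldim {G : Set (X → Bool)} {d j : ℕ} (hb : ¬ Shatters G (d+1))
    (h : ((j : ℕ∞) : WithBot ℕ∞) ≤ Ldim G) : Shatters G j := by
  by_cases hne : G.Nonempty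
  · have h0 := shatters_ldn hne hb
    have h1 : ¬ Shatters G (LdN G + 1) := fun hc => by
      have := le_ldn hb hc; omega
    rw [ldim_eq_coe h0 h1] at h
    have hj : j ≤ LdN G := by exact_mod_cast h
    exact shatters_anti hj h0
  · rw [ldim_eq_bot hne] at h
    simp at h

lemma shatters_of_ldim_eq {G : Set (X → Bool)} {k : ℕ}
    (h : Ldim G = ((k : ℕ∞) : WithBot ℕ∞)) : Shatters G k ∧ ¬ Shatters G (k+1) := by
  have hb : ¬ Shatters G (k+1) := by
    intro hc
    have : (((k+1 : ℕ) : ℕ∞) : WithBot ℕ∞) ≤ Ldim G :=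
      le_iSup₂ (f := fun (n : ℕ) (_ : n ∈ {n : ℕ | Shatters G n}) => ((n : ℕ∞) : WithBot ℕ∞)) (k+1) hc
    rw [h] at this
    have : (k+1 : ℕ) ≤ k := by exact_mod_cast this
    omega
  exact ⟨shatters_of_coe_le_ldim hb h.ge, hb⟩

end Aux
section Aux2
variable {X : Type*}

lemma VS_nil (H : Set (X → Bool)) : VS H [] = H := by
  ext h; simp [VS, Consistent]

lemma consistent_append {h : X → Bool} {l1 l2 : List (X × Bool)} :
    Consistent h (l1 ++ l2) ↔ Consistent h l1 ∧ Consistent h l2 := by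
  simp [Consistent, List.mem_append, or_imp, forall_and]

lemma VS_concat (H : Set (X → Bool)) (S : List (X × Bool)) (p : X × Bool) :
    VS H (S ++ [p]) = Restrict (VS H S) p.1 p.2 := by
  ext h
  simp only [VS, Restrict, Set.mem_setOf_eq, consistent_append]
  constructor
  · rintro ⟨h1, h2, h3⟩
    exact ⟨⟨h1, h2⟩, h3 p (by simp)⟩
  · rintro ⟨⟨h1, h2⟩, h3⟩
    refine ⟨h1, h2, ?_⟩
    intro q hq
    simp at hq
    subst hq
    exact h3

lemma VS_append_subset (H : Set (X → Bool)) (l1 l2 : List (X × Bool)) :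
    VS H (l1 ++ l2) ⊆ VS H l1 :=
  fun _ hh => ⟨hh.1, (consistent_append.mp hh.2).1⟩

lemma VS_subset (H : Set (X → Bool)) (S : List (X × Bool)) : VS H S ⊆ H := fun _ hh => hh.1

lemma realizable_iff {H : Set (X → Bool)} {S : List (X × Bool)} :
    Realizable H S ↔ (VS H S).Nonempty := by
  constructor
  · rintro ⟨h, h1, h2⟩; exact ⟨h, h1, h2⟩
  · rintro ⟨h, h1, h2⟩; exact ⟨h, h1, h2⟩

lemma mistakesFrom_append (A : List (X × Bool) → X → Bool) (l1 l2 pre : List (X × Bool)) :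
    MistakesFrom A pre (l1 ++ l2) = MistakesFrom A pre l1 + MistakesFrom A (pre ++ l1) l2 := by
  induction l1 generalizing pre with
  | nil => simp [MistakesFrom]
  | cons p rest ih =>
    rw [List.cons_append]
    simp only [MistakesFrom]
    rw [ih (pre ++ [p]), List.append_assoc, List.singleton_append]
    omega

lemma mistakesFrom_congr {A B : List (X × Bool) → X → Bool} (l : List (X × Bool)) :
    ∀ (pre : List (X × Bool)),
    (∀ l1 p l2, l = l1 ++ p :: l2 → A (pre ++ l1) p.1 = B (pre ++ l1) p.1) →
    MistakesFrom A pre l = MistakesFrom B pre l := by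
  induction l with
  | nil => intro pre _; rfl
  | cons p rest ih =>
    intro pre hagree
    have h0 : A pre p.1 = B pre p.1 := by
      have := hagree [] p rest (by simp)
      simpa using this
    have h1 := ih (pre ++ [p]) (fun l1 q l2 hl => by
      have := hagree (p :: l1) q l2 (by simp [hl])
      simpa [List.append_assoc] using this)
    simp [MistakesFrom, h0, h1]

end Aux2
section Aux3
variable {X : Type*}

noncomputable def soa (H : Set (X → Bool)) : List (X × Bool) → X → Bool :=
  fun pre x => if Ldim (Restrict (VS H pre) x false) ≤ Ldim (Restrict (VS H pre) x true)
    then true else false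

lemma not_shatters_VS {H : Set (X → Bool)} {d : ℕ} (hb : ¬ Shatters H (d+1))
    (T : List (X × Bool)) : ¬ Shatters (VS H T) (d+1) :=
  fun hc => hb (shatters_mono (VS_subset H T) hc)

lemma soa_step {H : Set (X → Bool)} {d : ℕ} (hb : ¬ Shatters H (d+1))
    (pre : List (X × Bool)) (p : X × Bool)
    (hmis : soa H pre p.1 ≠ p.2) (hne : (VS H (pre ++ [p])).Nonempty) :
    LdN (VS H (pre ++ [p])) + 1 ≤ LdN (VS H pre) := by
  set V := VS H pre with hV
  have hbV : ¬ Shatters V (d+1) := not_shatters_VS hb pre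
  have hbR : ∀ r : Bool, ¬ Shatters (Restrict V p.1 r) (d+1) :=
    fun r hc => hbV (shatters_mono (restrict_subset V p.1 r) hc)
  have hvs : VS H (pre ++ [p]) = Restrict V p.1 p.2 := VS_concat H pre p
  set j := LdN (VS H (pre ++ [p])) with hj
  have hshjW : Shatters (VS H (pre ++ [p])) j :=
    shatters_ldn hne (not_shatters_VS hb (pre ++ [p]))
  have hshj : Shatters (Restrict V p.1 p.2) j := hvs ▸ hshjW
  have hle : Ldim (Restrict V p.1 p.2) ≤ Ldim (Restrict V p.1 (!p.2)) := by
    rcases Bool.eq_false_or_eq_true p.2 with h2 | h2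
    · -- p.2 = true, soa predicted false, so condition fails
      have hcond : ¬ (Ldim (Restrict V p.1 false) ≤ Ldim (Restrict V p.1 true)) := by
        intro hc
        apply hmis
        rw [h2]
        simp only [soa, ← hV]
        rw [if_pos hc]
      simp only [h2, Bool.not_true]
      exact le_of_lt (lt_of_not_ge hcond)
    · -- p.2 = false, soa predicted true, so condition holds
      have hcond : Ldim (Restrict V p.1 false) ≤ Ldim (Restrict V p.1 true) := by
        by_contra hc
        apply hmis
        rw [h2]
        simp only [soa, ← hV]
        rw [if_neg hc]
      simp only [h2, Bool.not_false]
      exact hcond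
  have hcoe : ((j : ℕ∞) : WithBot ℕ∞) ≤ Ldim (Restrict V p.1 (!p.2)) := by
    refine le_trans ?_ hle
    exact le_iSup₂ (f := fun (n : ℕ) (_ : n ∈ {n : ℕ | Shatters (Restrict V p.1 p.2) n}) =>
      ((n : ℕ∞) : WithBot ℕ∞)) j hshj
  have hshj' : Shatters (Restrict V p.1 (!p.2)) j := shatters_of_coe_le_ldim (hbR (!p.2)) hcoe
  have hVj : Shatters V (j+1) := by
    refine ⟨p.1, ?_, ?_⟩ <;> rcases Bool.eq_false_or_eq_true p.2 with h2 | h2 <;>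
      simp only [h2, Bool.not_true, Bool.not_false] at hshj hshj' <;>
      first | exact hshj | exact hshj'
  exact le_ldn hbV hVj

lemma soa_bound {H : Set (X → Bool)} {d : ℕ} (hb : ¬ Shatters H (d+1)) :
    ∀ (l pre : List (X × Bool)), Realizable H (pre ++ l) →
      MistakesFrom (soa H) pre l + LdN (VS H (pre ++ l)) ≤ LdN (VS H pre) := by
  intro l
  induction l with
  | nil => intro pre _; simp [MistakesFrom]
  | cons p rest ih =>
    intro pre hreal
    have hassoc : pre ++ p :: rest = (pre ++ [p]) ++ rest := by simp
    have hreal' : Realizable H ((pre ++ [p]) ++ rest) := by rwa [hassoc] at hreal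
    have hih := ih (pre ++ [p]) hreal'
    have hne : (VS H (pre ++ [p])).Nonempty :=
      (realizable_iff.mp hreal').mono (VS_append_subset H (pre ++ [p]) rest)
    rw [hassoc]
    simp only [MistakesFrom]
    by_cases hmis : soa H pre p.1 ≠ p.2
    · have hstep := soa_step hb pre p hmis hne
      rw [if_pos hmis]
      omega
    · have hmono : LdN (VS H (pre ++ [p])) ≤ LdN (VS H pre) :=
        ldn_mono (not_shatters_VS hb pre) (VS_append_subset H pre [p])
      rw [if_neg hmis]
      omega

lemma adversary {H : Set (X → Bool)} (A : List (X × Bool) → X → Bool) :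
    ∀ (k : ℕ) (pre : List (X × Bool)), Shatters (VS H pre) k →
      ∃ l, Realizable H (pre ++ l) ∧ k ≤ MistakesFrom A pre l := by
  intro k
  induction k with
  | zero =>
    intro pre h
    refine ⟨[], ?_, Nat.zero_le _⟩
    rw [List.append_nil, realizable_iff]
    exact h
  | succ k ih =>
    intro pre h
    obtain ⟨x', h0, h1⟩ := h
    set y := !(A pre x') with hy
    have hsh : Shatters (Restrict (VS H pre) x' y) k := by
      rcases Bool.eq_false_or_eq_true (A pre x') with hA | hA <;>
        simp only [hy, hA, Bool.not_false, Bool.not_true]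
      · exact h0
      · exact h1
    have hvs : VS H (pre ++ [(x', y)]) = Restrict (VS H pre) x' y := VS_concat H pre (x', y)
    obtain ⟨l, hl1, hl2⟩ := ih (pre ++ [(x', y)]) (by rw [hvs]; exact hsh)
    refine ⟨(x', y) :: l, ?_, ?_⟩
    · rwa [List.append_assoc, List.singleton_append] at hl1
    · have hA : A pre x' ≠ y := by
        rcases Bool.eq_false_or_eq_true (A pre x') with hA | hA <;> simp [hy, hA]
      simp only [MistakesFrom, if_pos hA]
      omega

end Aux3
section Aux4
variable {X : Type*}

lemma le_mb {A : List (X × Bool) → X → Bool} {H : Set (X → Bool)} {S : List (X × Bool)}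
    (h : Realizable H S) : (Mistakes A S : ℕ∞) ≤ MB A H :=
  le_iSup₂ (f := fun (S : List (X × Bool)) (_ : S ∈ {S | Realizable H S}) =>
    ((Mistakes A S : ℕ∞))) S h

lemma mb_le_iff {A : List (X × Bool) → X → Bool} {H : Set (X → Bool)} {c : ℕ∞} :
    MB A H ≤ c ↔ ∀ S, Realizable H S → (Mistakes A S : ℕ∞) ≤ c := by
  rw [MB, iSup₂_le_iff]
  rfl

lemma mb_ge {H : Set (X → Bool)} {d : ℕ} (hsh : Shatters H d)
    (A : List (X × Bool) → X → Bool) : (d : ℕ∞) ≤ MB A H := by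
  have h0 : Shatters (VS H []) d := by rw [VS_nil]; exact hsh
  obtain ⟨l, hl1, hl2⟩ := adversary A d [] h0
  rw [List.nil_append] at hl1
  calc (d : ℕ∞) ≤ (Mistakes A l : ℕ∞) := by
        exact_mod_cast hl2
    _ ≤ MB A H := le_mb hl1

lemma mb_soa_le {H : Set (X → Bool)} {d : ℕ} (hb : ¬ Shatters H (d+1)) :
    MB (soa H) H ≤ (d : ℕ∞) := by
  rw [mb_le_iff]
  intro S hS
  have h1 := soa_bound hb S [] (by rwa [List.nil_append])
  rw [List.nil_append, VS_nil] at h1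
  have h2 : LdN H ≤ d := ldn_le hb
  have : Mistakes (soa H) S ≤ d := by
    rw [Mistakes]; omega
  exact_mod_cast this

lemma iInf_mb {H : Set (X → Bool)} {d : ℕ} (hsh : Shatters H d) (hb : ¬ Shatters H (d+1)) :
    (⨅ B : List (X × Bool) → X → Bool, MB B H) = (d : ℕ∞) :=
  le_antisymm ((iInf_le _ (soa H)).trans (mb_soa_le hb)) (le_iInf (mb_ge hsh))

lemma isOptimal_iff {H : Set (X → Bool)} {d : ℕ} (hsh : Shatters H d)
    (hb : ¬ Shatters H (d+1)) {A : List (X × Bool) → X → Bool} :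
    IsOptimal A H ↔ MB A H = (d : ℕ∞) := by
  rw [IsOptimal, iInf_mb hsh hb]

lemma bb_opt {H : Set (X → Bool)} {d : ℕ} (hsh : Shatters H d) (hb : ¬ Shatters H (d+1))
    {A : List (X × Bool) → X → Bool} (hA : MB A H = (d : ℕ∞))
    {S : List (X × Bool)} (x : X)
    (hlt : Mistakes A S + LdN (VS H S) + 1 ≤ d) (b : Bool) :
    ∃ B : List (X × Bool) → X → Bool, IsOptimal B H ∧ B S x = b := by
  classical
  set B : List (X × Bool) → X → Bool := fun pre x' =>
    if pre = S ∧ x' = x then b else if S <+: pre then soa H pre x' else A pre x' with hB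
  refine ⟨B, ?_, by simp [hB]⟩
  rw [isOptimal_iff hsh hb]
  refine le_antisymm ?_ (mb_ge hsh B)
  rw [mb_le_iff]
  intro T hT
  by_cases hpre : S <+: T
  · obtain ⟨T', rfl⟩ := hpre
    have hsplit : Mistakes B (S ++ T') = MistakesFrom B [] S + MistakesFrom B S T' := by
      rw [Mistakes, mistakesFrom_append, List.nil_append]
    have h1 : MistakesFrom B [] S = MistakesFrom A [] S := by
      apply mistakesFrom_congr
      intro l1 p l2 hl
      rw [List.nil_append]
      have hlen : l1.length < S.length := by
        rw [hl]; simp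
      have hne1 : ¬ (l1 = S ∧ p.1 = x) := by
        rintro ⟨rfl, -⟩; omega
      have hne2 : ¬ (S <+: l1) := by
        intro hc
        have := hc.length_le
        omega
      simp [hB, hne1, hne2]
    have h2 : MistakesFrom B S T' ≤ LdN (VS H S) + 1 := by
      cases T' with
      | nil => simp [MistakesFrom]
      | cons p rest =>
        have hagree : MistakesFrom B (S ++ [p]) rest = MistakesFrom (soa H) (S ++ [p]) rest := by
          apply mistakesFrom_congr
          intro l1 q l2 hl
          have hne1 : ¬ ((S ++ [p]) ++ l1 = S ∧ q.1 = x) := by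
            rintro ⟨hc, -⟩
            have := congrArg List.length hc
            simp at this
          have hpre2 : S <+: (S ++ [p]) ++ l1 := ⟨[p] ++ l1, by simp⟩
          simp [hB, hne1, hpre2]
        have hreal' : Realizable H ((S ++ [p]) ++ rest) := by
          rwa [List.append_assoc, List.singleton_append]
        have hbound := soa_bound hb rest (S ++ [p]) hreal'
        have hmono : LdN (VS H (S ++ [p])) ≤ LdN (VS H S) :=
          ldn_mono (not_shatters_VS hb S) (VS_append_subset H S [p])
        have : MistakesFrom B S (p :: rest) ≤ 1 + MistakesFrom B (S ++ [p]) rest := by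
          simp only [MistakesFrom]
          split <;> omega
        omega
    have hAS : MistakesFrom A [] S = Mistakes A S := rfl
    have : Mistakes B (S ++ T') ≤ d := by omega
    exact_mod_cast this
  · have heq : Mistakes B T = Mistakes A T := by
      apply mistakesFrom_congr
      intro l1 p l2 hl
      rw [List.nil_append]
      have hpl : l1 <+: T := ⟨p :: l2, hl.symm⟩
      have hne1 : ¬ (l1 = S ∧ p.1 = x) := by
        rintro ⟨rfl, -⟩
        exact hpre hpl
      have hne2 : ¬ (S <+: l1) := fun hc => hpre (hc.trans hpl)
      simp [hB, hne1, hne2]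
    rw [heq]
    calc ((Mistakes A T : ℕ∞)) ≤ MB A H := le_mb hT
      _ = (d : ℕ∞) := hA

end Aux4
/-- if `Ldim H = d < ∞` and `(S,x)` is optimally significant, then there is
`m` such that every optimal learner makes exactly `m` mistakes on `S`, and
`Ldim(H_S) = d - m`. -/
theorem stmt9 {X : Type*} (H : Set (X → Bool)) (d : ℕ)
    (hd : Ldim H = ((d : ℕ∞) : WithBot ℕ∞))
    (S : List (X × Bool)) (x : X) (hsig : OptSignificant H S x) :
    ∃ m : ℕ, (∀ A : List (X × Bool) → X → Bool, IsOptimal A H → Mistakes A S = m) ∧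
      Ldim (VS H S) = (((d - m : ℕ) : ℕ∞) : WithBot ℕ∞) := by
  obtain ⟨hshd, hbd⟩ := shatters_of_ldim_eq hd
  obtain ⟨hS, hagree⟩ := hsig
  have hbVS := not_shatters_VS hbd S
  set k := LdN (VS H S) with hk
  have hneVS : (VS H S).Nonempty := realizable_iff.mp hS
  have hkS : Shatters (VS H S) k := shatters_ldn hneVS hbVS
  have hkd : k ≤ d := shatters_le hbd (shatters_mono (VS_subset H S) hkS)
  have hup : ∀ A : List (X × Bool) → X → Bool, IsOptimal A H → Mistakes A S + k ≤ d := by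
    intro A hA
    rw [isOptimal_iff hshd hbd] at hA
    obtain ⟨l, hl1, hl2⟩ := adversary A k S hkS
    have hsp : Mistakes A (S ++ l) = Mistakes A S + MistakesFrom A S l := by
      rw [Mistakes, mistakesFrom_append, List.nil_append]
      rfl
    have hle : (Mistakes A (S ++ l) : ℕ∞) ≤ (d : ℕ∞) := hA ▸ le_mb hl1
    have hnat : Mistakes A (S ++ l) ≤ d := by exact_mod_cast hle
    omega
  have hlo : ∀ A : List (X × Bool) → X → Bool, IsOptimal A H → d ≤ Mistakes A S + k := by
    intro A hA
    by_contra hc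
    rw [isOptimal_iff hshd hbd] at hA
    have hlt : Mistakes A S + LdN (VS H S) + 1 ≤ d := by omega
    obtain ⟨B0, hB0, hB0x⟩ := bb_opt hshd hbd hA x hlt false
    obtain ⟨B1, hB1, hB1x⟩ := bb_opt hshd hbd hA x hlt true
    have hfin := hagree B0 B1 hB0 hB1
    rw [hB0x, hB1x] at hfin
    exact Bool.false_ne_true hfin
  refine ⟨d - k, ?_, ?_⟩
  · intro A hA
    have h1 := hup A hA
    have h2 := hlo A hA
    omega
  · have hdk : d - (d - k) = k := by omega
    rw [hdk]
    exact ldim_eq_coe hkS (fun hc => by have := le_ldn hbVS hc; omega)
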